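/- Let n ≥ 2 be an even integer, p a real number with p > 1, and t a nonzero complex number with p^(−1/2) < |t| < p^(1/2). Define v ∈ (ℂ×)^n by v_i = p^((n+1−2i)/2)·t for 1 ≤ i ≤ n/2 and v_i = p^((n+1−2i)/2)·t⁻¹ for n/2 < i ≤ n, and define v′ by v′_i = v_i for i < n and v′_n = (v_n)⁻¹. Then there exist no permutation π of {1,…,n} and signs ε : {1,…,n} → {+1,−1} with ∏_{i=1}^n ε_i = 1 such that v′_i = (v_{π(i)})^(ε_i) for all i. In other words, v and v′ lie in distinct orbits for the action of the Weyl group of type D_n (permutations combined with inversion of an even number of coordinates) on (ℂ×)^n. -/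

import Mathlib

/-- Let `n ≥ 2` be even, `p > 1` real, and `t` a nonzero complex number with
`p^(−1/2) < |t| < p^(1/2)`.  Let `v` be the tuple of Satake parameters
`v_i = p^((n+1−2i)/2)·t` for `1 ≤ i ≤ n/2` and `v_i = p^((n+1−2i)/2)·t⁻¹` for
`n/2 < i ≤ n` (below, `i : Fin n` corresponds to the 1-indexed index `(i:ℕ)+1`),
and let `v′` agree with `v` except that its last coordinate is inverted.  Then
`v` and `v′` are not in the same orbit of the Weyl group of type `D_n`
(permutations combined with inversion of an even number of coordinates). -/
theorem hecke_matrices_not_Dn_conjugate (n : ℕ) (hn : 2 ≤ n) (heven : Even n)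
    (p : ℝ) (hp : 1 < p) (t : ℂ) (ht : t ≠ 0)
    (htlow : p ^ (-(1 : ℝ) / 2) < ‖t‖)
    (htup : ‖t‖ < p ^ ((1 : ℝ) / 2)) :
    let v : Fin n → ℂ := fun i =>
      if (i : ℕ) + 1 ≤ n / 2
      then ((p ^ ((((n : ℝ)) + 1 - 2 * (((i : ℕ) : ℝ) + 1)) / 2) : ℝ) : ℂ) * t
      else ((p ^ ((((n : ℝ)) + 1 - 2 * (((i : ℕ) : ℝ) + 1)) / 2) : ℝ) : ℂ) * t⁻¹
    let v' : Fin n → ℂ := fun i => if (i : ℕ) + 1 < n then v i else (v i)⁻¹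
    ¬ ∃ (π : Equiv.Perm (Fin n)) (ε : Fin n → ℤ),
        (∀ i, ε i = 1 ∨ ε i = -1) ∧ (∏ i, ε i) = 1 ∧
        (∀ i, v' i = v (π i) ^ ε i) := by
  intro v v'
  rintro ⟨π, ε, hε, hprod, hmap⟩
  have hp0 : (0:ℝ) < p := lt_trans one_pos hp
  have ht0 : (0:ℝ) < ‖t‖ := norm_pos_iff.mpr ht
  have hvdef : ∀ i : Fin n, v i =
      if (i : ℕ) + 1 ≤ n / 2
      then ((p ^ ((((n : ℝ)) + 1 - 2 * (((i : ℕ) : ℝ) + 1)) / 2) : ℝ) : ℂ) * t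
      else ((p ^ ((((n : ℝ)) + 1 - 2 * (((i : ℕ) : ℝ) + 1)) / 2) : ℝ) : ℂ) * t⁻¹ :=
    fun _ => rfl
  have hv'def : ∀ i : Fin n, v' i = if (i : ℕ) + 1 < n then v i else (v i)⁻¹ :=
    fun _ => rfl
  -- the absolute values of the coordinates of v
  have hv : ∀ j : Fin n,
      if (j : ℕ) + 1 ≤ n / 2 then 1 < ‖v j‖ else ‖v j‖ < 1 := by
    intro j
    rw [hvdef j]
    by_cases hj : (j : ℕ) + 1 ≤ n / 2
    · simp only [hj, if_true]
      rw [norm_mul, Complex.norm_real, Real.norm_eq_abs, abs_of_pos (Real.rpow_pos_of_pos hp0 _)]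
      have h2 : 2 * ((j : ℕ) + 1) ≤ n := by
        obtain ⟨m, hm⟩ := heven; omega
      have h2r : (2:ℝ) * (((j : ℕ) : ℝ) + 1) ≤ (n : ℝ) := by exact_mod_cast h2
      have hE1 : (1:ℝ)/2 ≤ ((n : ℝ) + 1 - 2 * (((j : ℕ) : ℝ) + 1)) / 2 := by linarith
      have hE : p ^ ((1:ℝ)/2) ≤ p ^ (((n : ℝ) + 1 - 2 * (((j : ℕ) : ℝ) + 1)) / 2) :=
        Real.rpow_le_rpow_of_exponent_le hp.le hE1
      have key := mul_lt_mul' hE htlow (Real.rpow_pos_of_pos hp0 _).le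
        (lt_of_lt_of_le (Real.rpow_pos_of_pos hp0 _) hE)
      calc (1:ℝ) = p ^ ((1:ℝ)/2) * p ^ (-(1:ℝ)/2) := by
            rw [← Real.rpow_add hp0]; norm_num
        _ < _ := key
    · simp only [hj, if_false]
      rw [norm_mul, norm_inv, Complex.norm_real, Real.norm_eq_abs, abs_of_pos (Real.rpow_pos_of_pos hp0 _)]
      have h2 : n + 2 ≤ 2 * ((j : ℕ) + 1) := by
        obtain ⟨m, hm⟩ := heven; omega
      have h2r : (n : ℝ) + 2 ≤ (2:ℝ) * (((j : ℕ) : ℝ) + 1) := by exact_mod_cast h2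
      have hE1 : ((n : ℝ) + 1 - 2 * (((j : ℕ) : ℝ) + 1)) / 2 ≤ -(1:ℝ)/2 := by linarith
      have hE : p ^ (((n : ℝ) + 1 - 2 * (((j : ℕ) : ℝ) + 1)) / 2) ≤ p ^ (-(1:ℝ)/2) :=
        Real.rpow_le_rpow_of_exponent_le hp.le hE1
      rw [← div_eq_mul_inv, div_lt_one ht0]
      exact lt_of_le_of_lt hE htlow
  have hvne : ∀ j : Fin n, ‖v j‖ ≠ 1 := by
    intro j
    have := hv j
    by_cases hj : (j : ℕ) + 1 ≤ n / 2 <;> simp [hj] at this <;> [exact ne_of_gt this;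
      exact ne_of_lt this]
  have hv0 : ∀ j : Fin n, 0 < ‖v j‖ := by
    intro j
    rw [hvdef j]
    have hrp : ((p ^ ((((n : ℝ)) + 1 - 2 * (((j : ℕ) : ℝ) + 1)) / 2) : ℝ) : ℂ) ≠ 0 := by
      exact_mod_cast (Real.rpow_pos_of_pos hp0 _).ne'
    split
    · exact norm_pos_iff.mpr (mul_ne_zero hrp ht)
    · exact norm_pos_iff.mpr (mul_ne_zero hrp (inv_ne_zero ht))
  -- the sign invariant
  set s : ℂ → ℤ := fun z => if 1 < ‖z‖ then 1 else -1 with hs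
  have hsinv : ∀ j : Fin n, s ((v j)⁻¹) = - s (v j) := by
    intro j
    simp only [hs, norm_inv]
    rcases lt_or_gt_of_ne (hvne j) with h | h
    · rw [if_pos ((one_lt_inv₀ (hv0 j)).mpr h), if_neg (not_lt.mpr h.le)]; ring
    · rw [if_neg (not_lt.mpr (inv_le_one_of_one_le₀ h.le)), if_pos h]
  have hsz : ∀ (j : Fin n) (e : ℤ), (e = 1 ∨ e = -1) → s (v j ^ e) = e * s (v j) := by
    intro j e he
    rcases he with rfl | rfl
    · rw [zpow_one, one_mul]
    · rw [zpow_neg_one, hsinv j]; ring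
  -- the invariant is preserved by the Weyl group action
  have hmain : ∏ i, s (v' i) = ∏ i, s (v i) := by
    calc ∏ i, s (v' i) = ∏ i, s (v (π i) ^ ε i) := by
          exact Finset.prod_congr rfl fun i _ => by rw [hmap i]
      _ = ∏ i, (ε i * s (v (π i))) :=
          Finset.prod_congr rfl fun i _ => hsz (π i) (ε i) (hε i)
      _ = (∏ i, ε i) * ∏ i, s (v (π i)) := Finset.prod_mul_distrib
      _ = ∏ i, s (v (π i)) := by rw [hprod, one_mul]
      _ = ∏ i, s (v i) := Equiv.prod_comp π fun j => s (v j)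
  -- but v' flips exactly one sign
  have hlast : n - 1 < n := by omega
  set L : Fin n := ⟨n - 1, hlast⟩ with hL
  have hneg : ∏ i, s (v' i) = - ∏ i, s (v i) := by
    rw [← Finset.mul_prod_erase Finset.univ (fun i => s (v' i)) (Finset.mem_univ L),
        ← Finset.mul_prod_erase Finset.univ (fun i => s (v i)) (Finset.mem_univ L)]
    have h1 : s (v' L) = - s (v L) := by
      rw [hv'def L]
      have : ¬ ((L : ℕ) + 1 < n) := by simp [hL]; omega
      rw [if_neg this]
      exact hsinv L
    have h2 : ∏ i ∈ Finset.univ.erase L, s (v' i) = ∏ i ∈ Finset.univ.erase L, s (v i) := by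
      refine Finset.prod_congr rfl fun i hi => ?_
      have hiL : i ≠ L := (Finset.mem_erase.mp hi).1
      have hlt : (i : ℕ) + 1 < n := by
        have h1 : (i : ℕ) < n := i.isLt
        have h2 : (i : ℕ) ≠ n - 1 := by
          intro h; exact hiL (Fin.ext h)
        omega
      rw [hv'def i, if_pos hlt]
    rw [h1, h2, neg_mul]
  have hne : ∏ i, s (v i) ≠ 0 := by
    refine Finset.prod_ne_zero_iff.mpr fun i _ => ?_
    simp only [hs]
    split <;> norm_num
  rw [hneg] at hmain
  omega
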